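/- Let Σ₀ be a real symmetric positive definite n×n matrix with smallest eigenvalue λmin > 0, and let B be a real symmetric positive semidefinite n×n matrix with ‖B‖₂ < 1/2 and tr(B) > 0. Set Δ := Σ₀^{1/2} B Σ₀^{1/2}, where Σ₀^{1/2} is the unique symmetric positive definite square root of Σ₀. Then tr(Δ) ≥ λmin · tr(B) > 0, and the Taylor remainder R := −(1/2) log det(I − B) − (1/2) tr(B) satisfies |R| / tr(Δ) ≤ ‖B‖₂ / (2 λmin). -/

import Mathlib

open Matrix

/-- The spectral norm (largest singular value) of a real square matrix,
realized as the operator norm of the induced map on Euclidean space. -/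
noncomputable def specNorm {n : ℕ} (B : Matrix (Fin n) (Fin n) ℝ) : ℝ :=
  ‖(Matrix.toEuclideanLin B).toContinuousLinearMap‖

/-- The square root of a positive semidefinite matrix, as `Matrix.PosSemidef.sqrt`
was defined in the older Mathlib. -/
noncomputable def posSemidefSqrt {n : ℕ} {A : Matrix (Fin n) (Fin n) ℝ} (hA : A.PosSemidef) :
    Matrix (Fin n) (Fin n) ℝ :=
  hA.1.eigenvectorUnitary.1 * diagonal ((↑) ∘ (√·) ∘ hA.1.eigenvalues) *
    (star hA.1.eigenvectorUnitary : Matrix (Fin n) (Fin n) ℝ)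

lemma posSemidefSqrt_mul_self {n : ℕ} {A : Matrix (Fin n) (Fin n) ℝ} (hA : A.PosSemidef) :
    posSemidefSqrt hA * posSemidefSqrt hA = A := by
  have key : ∀ (U D E : Matrix (Fin n) (Fin n) ℝ), star U * U = 1 → D * D = E →
      U * D * star U * (U * D * star U) = U * E * star U := by
    intro U D E h1 h2
    rw [show U * D * star U * (U * D * star U) = U * (D * (star U * U) * D) * star U by
      simp only [Matrix.mul_assoc], h1, Matrix.mul_one, h2]
  conv_rhs => rw [hA.1.spectral_theorem, Unitary.conjStarAlgAut_apply]
  unfold posSemidefSqrt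
  apply key
  · exact Matrix.mem_unitaryGroup_iff'.mp hA.1.eigenvectorUnitary.2
  · rw [diagonal_mul_diagonal]
    congr 1
    ext i
    simp [Real.mul_self_sqrt (hA.eigenvalues_nonneg i)]

lemma posSemidefSqrt_conjTranspose {n : ℕ} {A : Matrix (Fin n) (Fin n) ℝ} (hA : A.PosSemidef) :
    (posSemidefSqrt hA)ᴴ = posSemidefSqrt hA := by
  unfold posSemidefSqrt
  rw [conjTranspose_mul, conjTranspose_mul, ← star_eq_conjTranspose, ← star_eq_conjTranspose,
    star_star, star_eq_conjTranspose (diagonal _), diagonal_conjTranspose, Matrix.mul_assoc]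
  congr 2


-- aux 1: trace = sum of eigenvalues
lemma trace_eq_sum_eigs {n : ℕ} {A : Matrix (Fin n) (Fin n) ℝ} (hA : A.IsHermitian) :
    A.trace = ∑ i, hA.eigenvalues i := by
  conv_lhs => rw [hA.spectral_theorem, Unitary.conjStarAlgAut_apply]
  rw [Matrix.trace_mul_cycle]
  simp [Unitary.coe_star_mul_self, Matrix.trace_diagonal]

-- aux 2: eigenvalue absolute value bounded by spectral norm
lemma eig_abs_le_specNorm {n : ℕ} {B : Matrix (Fin n) (Fin n) ℝ} (hB : B.IsHermitian)
    (i : Fin n) : |hB.eigenvalues i| ≤ specNorm B := by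
  set v := hB.eigenvectorBasis i with hv
  have hv1 : ‖v‖ = 1 := hB.eigenvectorBasis.orthonormal.1 i
  have h1 : (Matrix.toEuclideanLin B).toContinuousLinearMap v = hB.eigenvalues i • v := by
    show Matrix.toEuclideanLin B v = _
    apply (WithLp.equiv 2 (Fin n → ℝ)).injective
    simpa using hB.mulVec_eigenvectorBasis i
  have h2 := (Matrix.toEuclideanLin B).toContinuousLinearMap.le_opNorm v
  rw [h1, norm_smul, hv1] at h2
  simp only [mul_one] at h2
  rw [Real.norm_eq_abs] at h2
  exact h2

-- aux 3: scalar remainder bound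
lemma scalar_remainder_bound {x : ℝ} (hx0 : 0 ≤ x) (hx : x < 1/2) :
    0 ≤ -(Real.log (1 - x) + x) ∧ -(Real.log (1 - x) + x) ≤ x^2 := by
  have h1 : (0:ℝ) < 1 - x := by linarith
  constructor
  · have := Real.log_le_sub_one_of_pos h1
    linarith
  · have habs : |x| < 1 := by rw [abs_of_nonneg hx0]; linarith
    have h4 := Real.abs_log_sub_add_sum_range_le habs 4
    rw [abs_of_nonneg hx0] at h4
    simp [Finset.sum_range_succ] at h4
    rw [abs_le] at h4
    have h5 : x^5 / (1 - x) ≤ 2 * x^5 := by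
      rw [div_le_iff₀ h1]; nlinarith [pow_nonneg hx0 5]
    have h6 := h4.1
    nlinarith [pow_nonneg hx0 2, pow_nonneg hx0 3, pow_nonneg hx0 4, pow_nonneg hx0 5,
      mul_nonneg (mul_nonneg hx0 hx0) (le_of_lt (by linarith : (0:ℝ) < 1 - 2*x)),
      mul_nonneg (pow_nonneg hx0 2) (le_of_lt (by linarith : (0:ℝ) < 1 - 2*x)),
      mul_nonneg (pow_nonneg hx0 3) (le_of_lt (by linarith : (0:ℝ) < 1 - 2*x))]

-- aux 4: trace of product of PSD matrices is nonneg
lemma psd_trace_nonneg {n : ℕ} {A : Matrix (Fin n) (Fin n) ℝ} (hA : A.PosSemidef) :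
    0 ≤ A.trace := by
  rw [trace_eq_sum_eigs hA.1]
  exact Finset.sum_nonneg fun i _ => hA.eigenvalues_nonneg i

lemma psd_mul_trace_nonneg {n : ℕ} {P Q : Matrix (Fin n) (Fin n) ℝ}
    (hP : P.PosSemidef) (hQ : Q.PosSemidef) : 0 ≤ (P * Q).trace := by
  have h1 : P * Q = posSemidefSqrt hP * posSemidefSqrt hP * Q := by rw [posSemidefSqrt_mul_self]
  rw [h1, ← Matrix.trace_mul_cycle]
  have h2 : (posSemidefSqrt hP * Q * posSemidefSqrt hP).PosSemidef := by
    have := hQ.mul_mul_conjTranspose_same (posSemidefSqrt hP)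
    rwa [posSemidefSqrt_conjTranspose] at this
  exact psd_trace_nonneg h2

-- aux 5: S0 - lmin • 1 is PSD
lemma sub_smul_one_psd {n : ℕ} {S0 : Matrix (Fin n) (Fin n) ℝ} (hS0 : S0.IsHermitian)
    {lmin : ℝ} (hl : ∀ i, lmin ≤ hS0.eigenvalues i) :
    (S0 - lmin • 1).PosSemidef := by
  set U : Matrix (Fin n) (Fin n) ℝ := (hS0.eigenvectorUnitary : Matrix (Fin n) (Fin n) ℝ) with hU
  have hUU : U * star U = 1 := Matrix.mem_unitaryGroup_iff.mp hS0.eigenvectorUnitary.2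
  have hkey : S0 - lmin • 1 =
      U * (diagonal (fun i => hS0.eigenvalues i - lmin)) * star U := by
    have hdg : (diagonal (fun i => hS0.eigenvalues i - lmin) : Matrix (Fin n) (Fin n) ℝ)
        = diagonal (RCLike.ofReal ∘ hS0.eigenvalues) - lmin • 1 := by
      rw [Matrix.smul_one_eq_diagonal, ← Matrix.diagonal_sub]
      simp [Function.comp]
    rw [hdg, Matrix.mul_sub, Matrix.sub_mul]
    conv_lhs => rw [hS0.spectral_theorem, Unitary.conjStarAlgAut_apply]
    congr 1
    rw [Matrix.mul_smul, Matrix.smul_mul, Matrix.mul_one, hUU]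
  rw [hkey]
  have hd : (diagonal (fun i => hS0.eigenvalues i - lmin) : Matrix (Fin n) (Fin n) ℝ).PosSemidef :=
    Matrix.PosSemidef.diagonal (fun i => sub_nonneg.mpr (hl i))
  have := hd.mul_mul_conjTranspose_same U
  rwa [← Matrix.star_eq_conjTranspose] at this

-- aux 6: det (1 - B) = prod (1 - eigenvalues)
lemma det_one_sub_eq_prod {n : ℕ} {B : Matrix (Fin n) (Fin n) ℝ} (hB : B.IsHermitian) :
    ((1 : Matrix (Fin n) (Fin n) ℝ) - B).det = ∏ i, (1 - hB.eigenvalues i) := by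
  set U : Matrix (Fin n) (Fin n) ℝ := (hB.eigenvectorUnitary : Matrix (Fin n) (Fin n) ℝ) with hU
  have hUU : U * star U = 1 := Matrix.mem_unitaryGroup_iff.mp hB.eigenvectorUnitary.2
  have hkey : (1 : Matrix (Fin n) (Fin n) ℝ) - B =
      U * (diagonal (fun i => 1 - hB.eigenvalues i)) * star U := by
    have hdg : (diagonal (fun i => 1 - hB.eigenvalues i) : Matrix (Fin n) (Fin n) ℝ)
        = 1 - diagonal (RCLike.ofReal ∘ hB.eigenvalues) := by
      rw [← Matrix.diagonal_one, ← Matrix.diagonal_sub]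
      simp [Function.comp]
    rw [hdg, Matrix.mul_sub, Matrix.sub_mul]
    conv_lhs => rw [hB.spectral_theorem, Unitary.conjStarAlgAut_apply]
    congr 1
    rw [Matrix.mul_one, hUU]
  have hUU' : star U * U = 1 := Matrix.mem_unitaryGroup_iff'.mp hB.eigenvectorUnitary.2
  rw [hkey, Matrix.det_mul, Matrix.det_mul, mul_comm, ← mul_assoc, ← Matrix.det_mul, hUU',
    Matrix.det_one, one_mul, Matrix.det_diagonal]

/-- Composite remainder estimate from the proof of Theorem 1: for a symmetric
positive definite `Σ₀` with smallest eigenvalue `λmin > 0` and a symmetric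
positive semidefinite `B` with `‖B‖₂ < 1/2` and `tr(B) > 0`, setting
`Δ = Σ₀^{1/2} B Σ₀^{1/2}`, one has `tr(Δ) ≥ λmin · tr(B) > 0` and the Taylor
remainder `R = −½ log det(I − B) − ½ tr(B)` satisfies
`|R| / tr(Δ) ≤ ‖B‖₂ / (2 λmin)`. -/
theorem mi_taylor_remainder_over_trace_bound
    {n : ℕ}
    (S0 : Matrix (Fin n) (Fin n) ℝ) (hS0 : S0.PosDef)
    (lmin : ℝ) (hlmin : 0 < lmin)
    (hmin : lmin = ⨅ i, hS0.isHermitian.eigenvalues i)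
    (B : Matrix (Fin n) (Fin n) ℝ) (hB : B.PosSemidef)
    (hBnorm : specNorm B < 1 / 2) (hBtr : 0 < B.trace)
    (Δ : Matrix (Fin n) (Fin n) ℝ)
    (hΔ : Δ = posSemidefSqrt hS0.posSemidef * B * posSemidefSqrt hS0.posSemidef) :
    lmin * B.trace ≤ Δ.trace ∧ 0 < Δ.trace ∧
    |(-(1 / 2)) * Real.log ((1 : Matrix (Fin n) (Fin n) ℝ) - B).det
        - (1 / 2) * B.trace| / Δ.trace
      ≤ specNorm B / (2 * lmin) := by
  rcases Nat.eq_zero_or_pos n with hn | hn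
  · subst hn
    simp [Matrix.trace] at hBtr
  haveI : Nonempty (Fin n) := ⟨⟨0, hn⟩⟩
  set s := specNorm B with hs
  have hs0 : 0 ≤ s := norm_nonneg _
  set μ := hB.1.eigenvalues with hμ
  have hμ0 : ∀ i, 0 ≤ μ i := hB.eigenvalues_nonneg
  have hμs : ∀ i, μ i ≤ s := fun i => le_of_abs_le (eig_abs_le_specNorm hB.1 i)
  have htrB : B.trace = ∑ i, μ i := trace_eq_sum_eigs hB.1
  have hl : ∀ i, lmin ≤ hS0.isHermitian.eigenvalues i := fun i =>
    hmin ▸ ciInf_le (Finite.bddBelow_range _) i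
  have htrΔ : Δ.trace = (S0 * B).trace := by
    rw [hΔ, Matrix.trace_mul_cycle, posSemidefSqrt_mul_self]
  have hkey1 : lmin * B.trace ≤ (S0 * B).trace := by
    have hC : (S0 - lmin • 1).PosSemidef := sub_smul_one_psd hS0.isHermitian hl
    have h0 : 0 ≤ ((S0 - lmin • 1) * B).trace := psd_mul_trace_nonneg hC hB
    have hexp : (S0 - lmin • 1) * B = S0 * B - lmin • B := by
      rw [Matrix.sub_mul, Matrix.smul_mul, Matrix.one_mul]
    rw [hexp, Matrix.trace_sub, Matrix.trace_smul, smul_eq_mul] at h0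
    linarith
  have htrΔ' : lmin * B.trace ≤ Δ.trace := by rw [htrΔ]; exact hkey1
  have hΔpos : 0 < Δ.trace := lt_of_lt_of_le (by positivity) htrΔ'
  refine ⟨htrΔ', hΔpos, ?_⟩
  -- determinant and log
  have hdet : ((1 : Matrix (Fin n) (Fin n) ℝ) - B).det = ∏ i, (1 - μ i) :=
    det_one_sub_eq_prod hB.1
  have hpos : ∀ i, (0:ℝ) < 1 - μ i := fun i => by
    have h1 := hμs i; have h2 := hBnorm; linarith
  have hlog : Real.log (∏ i, (1 - μ i)) = ∑ i, Real.log (1 - μ i) :=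
    Real.log_prod (fun i _ => ne_of_gt (hpos i))
  have hsum : ∑ i, (-(Real.log (1 - μ i) + μ i))
      = -(∑ i, Real.log (1 - μ i)) - ∑ i, μ i := by
    rw [← Finset.sum_neg_distrib, ← Finset.sum_sub_distrib]
    exact Finset.sum_congr rfl fun i _ => by ring
  have hRval : (-(1 / 2)) * Real.log ((1 : Matrix (Fin n) (Fin n) ℝ) - B).det
      - (1 / 2) * B.trace = (1/2) * ∑ i, (-(Real.log (1 - μ i) + μ i)) := by
    rw [hdet, hlog, htrB, hsum]; ring
  have hterm : ∀ i, 0 ≤ -(Real.log (1 - μ i) + μ i) ∧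
      -(Real.log (1 - μ i) + μ i) ≤ μ i ^ 2 :=
    fun i => scalar_remainder_bound (hμ0 i) (lt_of_le_of_lt (hμs i) hBnorm)
  have hSnn : 0 ≤ ∑ i, (-(Real.log (1 - μ i) + μ i)) :=
    Finset.sum_nonneg fun i _ => (hterm i).1
  have hSle : ∑ i, (-(Real.log (1 - μ i) + μ i)) ≤ s * B.trace := by
    rw [htrB, Finset.mul_sum]
    refine Finset.sum_le_sum fun i _ => ?_
    calc -(Real.log (1 - μ i) + μ i) ≤ μ i ^ 2 := (hterm i).2
      _ ≤ s * μ i := by nlinarith [hμ0 i, hμs i]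
  have habs : |(-(1 / 2)) * Real.log ((1 : Matrix (Fin n) (Fin n) ℝ) - B).det
      - (1 / 2) * B.trace| = (1/2) * ∑ i, (-(Real.log (1 - μ i) + μ i)) := by
    rw [hRval, abs_of_nonneg (by positivity)]
  rw [habs]
  have hd : (0:ℝ) < lmin * B.trace := by positivity
  calc ((1/2) * ∑ i, (-(Real.log (1 - μ i) + μ i))) / Δ.trace
      ≤ ((1/2) * (s * B.trace)) / (lmin * B.trace) := by
        apply div_le_div₀ (by positivity) (by linarith) hd htrΔ'
    _ = s / (2 * lmin) := by
        field_simp
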